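/- Let P = tconv{v_1, …, v_n} ⊆ ℝ^d be a d-polytrope, and for k ∈ {0, …, d} let c_k be the k-th corner of (v_1, …, v_n). Then P equals its cornered hull: P = ⋂_{k=0}^{d} (c_k + S̄_k). -/

import Mathlib

open Set

noncomputable section

/-- Extended (homogeneous) coordinates of a point of `TA^d ≅ ℝ^d`:
the 0-th coordinate is normalized to `0`. -/
def ext {d : ℕ} (x : Fin d → ℝ) : Fin (d + 1) → ℝ := Fin.cons 0 x

/-- The tropical combination of `(l, x)` and `(m, y)`. -/
def tropComb {d : ℕ} (l m : ℝ) (x y : Fin d → ℝ) : Fin d → ℝ :=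
  fun i => min (l + x i) (m + y i) - min l m

/-- A set is tropically convex if it is closed under tropical combinations. -/
def TropConvex {d : ℕ} (S : Set (Fin d → ℝ)) : Prop :=
  ∀ x ∈ S, ∀ y ∈ S, ∀ l m : ℝ, tropComb l m x y ∈ S

/-- The tropical convex hull: the intersection of all tropically convex supersets. -/
def tconv {d : ℕ} (V : Set (Fin d → ℝ)) : Set (Fin d → ℝ) :=
  ⋂₀ {S : Set (Fin d → ℝ) | TropConvex S ∧ V ⊆ S}

/-- A tropical polytope is the tropical convex hull of a finite set. -/
def IsTropPolytope {d : ℕ} (P : Set (Fin d → ℝ)) : Prop :=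
  ∃ V : Finset (Fin d → ℝ), P = tconv (V : Set (Fin d → ℝ))

/-- A polytrope is a tropical polytope which is also convex in the ordinary sense. -/
def IsPolytrope {d : ℕ} (P : Set (Fin d → ℝ)) : Prop :=
  IsTropPolytope P ∧ Convex ℝ P

/-- The `k`-th corner of the points `v_1, …, v_n`:
`(c_k)_j = min_i (v_{i,j} - v_{i,k}) - min_i (v_{i,0} - v_{i,k})` for `j = 1, …, d`
(homogeneous coordinates, `v_{i,0} := 0`). -/
def corner {d n : ℕ} (v : Fin n → Fin d → ℝ) (k : Fin (d + 1)) : Fin d → ℝ :=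
  fun j => (⨅ i, (ext (v i) j.succ - ext (v i) k)) - (⨅ i, (ext (v i) 0 - ext (v i) k))

/-- The `k`-th closed sector based at `a`:
`a + S̄_k = {x : x_k - a_k ≤ x_j - a_j for all j}` (homogeneous coordinates). -/
def sector {d : ℕ} (a : Fin d → ℝ) (k : Fin (d + 1)) : Set (Fin d → ℝ) :=
  {x | ∀ j : Fin (d + 1), ext x k - ext a k ≤ ext x j - ext a j}

namespace CorneredHullProof

variable {d n : ℕ}

@[simp] lemma ext_zero (x : Fin d → ℝ) : _root_.ext x 0 = 0 := rfl

@[simp] lemma ext_succ (x : Fin d → ℝ) (j : Fin d) : _root_.ext x j.succ = x j :=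
  Fin.cons_succ _ _ _

/-- `J ∈ K_i(x)`: generator `i` "covers" coordinate `K` at the (extended) point `x`. -/
def Cov (v : Fin n → Fin d → ℝ) (i : Fin n) (K : Fin (d + 1)) (x : Fin (d + 1) → ℝ) : Prop :=
  ∀ k, x k - _root_.ext (v i) k ≤ x K - _root_.ext (v i) K

/-- Every coordinate is covered: the covector criterion for tropical span membership. -/
def Cover (v : Fin n → Fin d → ℝ) (x : Fin (d + 1) → ℝ) : Prop :=
  ∀ K, ∃ i, Cov v i K x

/-- Candidate description of the tropical polytope. -/
def NSet (v : Fin n → Fin d → ℝ) : Set (Fin d → ℝ) := {x | Cover v (_root_.ext x)}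

lemma ext_tropComb (l m : ℝ) (x y : Fin d → ℝ) (k : Fin (d + 1)) :
    _root_.ext (tropComb l m x y) k = min (l + _root_.ext x k) (m + _root_.ext y k) - min l m := by
  refine Fin.cases ?_ (fun j => ?_) k
  · simp [tropComb]
  · simp [tropComb]

lemma tropConvex_NSet (v : Fin n → Fin d → ℝ) : TropConvex (NSet v) := by
  intro x hx y hy l m K
  rcases le_total (l + _root_.ext x K) (m + _root_.ext y K) with h | h
  · obtain ⟨i, hi⟩ := hx K
    refine ⟨i, fun k => ?_⟩
    rw [ext_tropComb, ext_tropComb, min_eq_left h]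
    have h1 : min (l + _root_.ext x k) (m + _root_.ext y k) ≤ l + _root_.ext x k := min_le_left _ _
    have h2 := hi k
    linarith
  · obtain ⟨i, hi⟩ := hy K
    refine ⟨i, fun k => ?_⟩
    rw [ext_tropComb, ext_tropComb, min_eq_right h]
    have h1 : min (l + _root_.ext x k) (m + _root_.ext y k) ≤ m + _root_.ext y k := min_le_right _ _
    have h2 := hi k
    linarith

lemma range_subset_NSet (v : Fin n → Fin d → ℝ) : Set.range v ⊆ NSet v := by
  rintro _ ⟨i, rfl⟩
  exact fun K => ⟨i, fun k => by simp⟩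

lemma tconv_subset_NSet (v : Fin n → Fin d → ℝ) : tconv (Set.range v) ⊆ NSet v := fun x hx =>
  hx (NSet v) ⟨tropConvex_NSet v, range_subset_NSet v⟩

lemma NSet_subset_tconv (hn : 0 < n) (v : Fin n → Fin d → ℝ) :
    NSet v ⊆ tconv (Set.range v) := by
  intro x hx S hS
  obtain ⟨hTS, hVS⟩ := hS
  haveI : Nonempty (Fin n) := ⟨⟨0, hn⟩⟩
  set lam : Fin n → ℝ := fun i => ⨆ k, (_root_.ext x k - _root_.ext (v i) k) with hlam
  have hlam_ge : ∀ i k, _root_.ext x k - _root_.ext (v i) k ≤ lam i := fun i k =>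
    le_ciSup (f := fun k => _root_.ext x k - _root_.ext (v i) k)
      (Set.Finite.bddAbove (Set.finite_range _)) k
  have hlam_eq : ∀ i K, Cov v i K (_root_.ext x) → lam i = _root_.ext x K - _root_.ext (v i) K := by
    intro i K hiK
    exact le_antisymm (ciSup_le fun k => hiK k) (hlam_ge i K)
  set g : Fin n → Fin (d + 1) → ℝ := fun i k => lam i + _root_.ext (v i) k with hg
  have key : ∀ (T : Finset (Fin n)) (hT : T.Nonempty),
      (fun j : Fin d => T.inf' hT (fun i => g i j.succ) - T.inf' hT (fun i => g i 0)) ∈ S := by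
    intro T hT
    induction hT using Finset.Nonempty.cons_induction with
    | singleton a =>
        simp only [Finset.inf'_singleton]
        have he : (fun j : Fin d => g a j.succ - g a 0) = v a := by
          funext j
          simp [g]
        rw [he]
        exact hVS ⟨a, rfl⟩
    | cons a T haT hT ih =>
        simp only [Finset.inf'_cons hT]
        have hz := hTS (v a) (hVS ⟨a, rfl⟩) _ ih (lam a) (T.inf' hT (fun i => g i 0))
        have he : tropComb (lam a) (T.inf' hT (fun i => g i 0)) (v a)
            (fun j : Fin d => T.inf' hT (fun i => g i j.succ) - T.inf' hT (fun i => g i 0))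
            = (fun j : Fin d => (g a j.succ ⊓ T.inf' hT fun i => g i j.succ) -
                (g a 0 ⊓ T.inf' hT fun i => g i 0)) := by
          funext j
          show min _ _ - min _ _ = _
          have e1 : T.inf' hT (fun i => g i 0) +
              (T.inf' hT (fun i => g i j.succ) - T.inf' hT (fun i => g i 0))
              = T.inf' hT (fun i => g i j.succ) := by ring
          have e2 : g a j.succ = lam a + v a j := by simp [g]
          have e3 : g a 0 = lam a := by simp [g]
          rw [e1, e2, e3]
        rw [he] at hz
        exact hz
  have huniv : ∀ k, (Finset.univ.inf' Finset.univ_nonempty (fun i => g i k)) = _root_.ext x k := by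
    intro k
    apply le_antisymm
    · obtain ⟨i, hi⟩ := hx k
      have hgik : g i k = _root_.ext x k := by
        have := hlam_eq i k hi
        simp only [g, this]; ring
      calc Finset.univ.inf' Finset.univ_nonempty (fun i => g i k) ≤ g i k :=
            Finset.inf'_le _ (Finset.mem_univ i)
        _ = _root_.ext x k := hgik
    · apply Finset.le_inf'
      intro i _
      have := hlam_ge i k
      simp only [g]
      linarith
  have hfin := key Finset.univ Finset.univ_nonempty
  have hxz : (fun j : Fin d => Finset.univ.inf' Finset.univ_nonempty (fun i => g i j.succ) -
      Finset.univ.inf' Finset.univ_nonempty (fun i => g i 0)) = x := by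
    funext j
    rw [huniv, huniv]
    simp
  rwa [hxz] at hfin

lemma tconv_eq_NSet (hn : 0 < n) (v : Fin n → Fin d → ℝ) :
    tconv (Set.range v) = NSet v :=
  Set.Subset.antisymm (tconv_subset_NSet v) (NSet_subset_tconv hn v)

lemma ext_corner (v : Fin n → Fin d → ℝ) (K : Fin (d + 1)) (kk : Fin (d + 1)) :
    _root_.ext (corner v K) kk
      = (⨅ i, (_root_.ext (v i) kk - _root_.ext (v i) K)) - (⨅ i, (_root_.ext (v i) 0 - _root_.ext (v i) K)) := by
  refine Fin.cases ?_ (fun j => ?_) kk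
  · simp
  · simp [corner]

lemma mem_sector_corner_iff (hn : 0 < n) (v : Fin n → Fin d → ℝ) (x : Fin d → ℝ)
    (K : Fin (d + 1)) :
    x ∈ sector (corner v K) K ↔
      ∀ j, _root_.ext x K - _root_.ext x j ≤ -(⨅ i, (_root_.ext (v i) j - _root_.ext (v i) K)) := by
  haveI : Nonempty (Fin n) := ⟨⟨0, hn⟩⟩
  have key : ∀ j, _root_.ext (corner v K) K - _root_.ext (corner v K) j
      = -(⨅ i, (_root_.ext (v i) j - _root_.ext (v i) K)) := by
    intro j
    rw [ext_corner, ext_corner]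
    have hK : (⨅ i, (_root_.ext (v i) K - _root_.ext (v i) K)) = 0 := by
      simp
    rw [hK]
    ring
  constructor
  · intro h j
    have := h j
    have hkey := key j
    simp only [sector, Set.mem_setOf_eq] at h
    linarith [h j]
  · intro h j
    have := h j
    have hkey := key j
    linarith


/-- `J`-normalized generators: `uu v J i = v_i - v_{iJ} * 1` in homogeneous coordinates. -/
def uu (v : Fin n → Fin d → ℝ) (J : Fin (d + 1)) (i : Fin n) : Fin (d + 1) → ℝ :=
  fun k => _root_.ext (v i) k - _root_.ext (v i) J

/-- The `J`-normalized slice of the (homogenized) tropical polytope. -/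
def CJ (v : Fin n → Fin d → ℝ) (J : Fin (d + 1)) : Set (Fin (d + 1) → ℝ) :=
  {x | Cover v x ∧ x J = 0}

lemma cov_shift (v : Fin n → Fin d → ℝ) (i : Fin n) (K : Fin (d + 1))
    (x : Fin (d + 1) → ℝ) (c : ℝ) :
    Cov v i K (fun k => x k + c) ↔ Cov v i K x := by
  unfold Cov
  constructor <;> intro h k <;> have h2 := h k <;> dsimp only at h2 ⊢ <;> linarith

lemma cover_iff_proj (v : Fin n → Fin d → ℝ) (x : Fin (d + 1) → ℝ) :
    Cover v x ↔ (fun j : Fin d => x j.succ - x 0) ∈ NSet v := by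
  have hx : _root_.ext (fun j : Fin d => x j.succ - x 0) = fun k => x k + (-(x 0)) := by
    funext k
    refine Fin.cases ?_ (fun j => ?_) k <;> simp <;> ring
  constructor
  · intro h
    show Cover v _
    rw [hx]
    intro K; obtain ⟨i, hi⟩ := h K; exact ⟨i, (cov_shift v i K x _).2 hi⟩
  · intro h
    have h' : Cover v (fun k => x k + (-(x 0))) := by rw [← hx]; exact h
    intro K; obtain ⟨i, hi⟩ := h' K
    exact ⟨i, (cov_shift v i K x _).1 hi⟩

lemma mid_mem_CJ {v : Fin n → Fin d → ℝ} {J : Fin (d + 1)}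
    (hconv : Convex ℝ (NSet v)) {x y : Fin (d + 1) → ℝ}
    (hx : x ∈ CJ v J) (hy : y ∈ CJ v J) :
    (fun k => x k / 2 + y k / 2) ∈ CJ v J := by
  constructor
  · rw [show (fun k => x k / 2 + y k / 2) = (fun k => x k / 2 + y k / 2) from rfl]
    rw [cover_iff_proj]
    have hx' := (cover_iff_proj v x).1 hx.1
    have hy' := (cover_iff_proj v y).1 hy.1
    have hmem := hconv hx' hy' (by norm_num : (0:ℝ) ≤ 1/2) (by norm_num : (0:ℝ) ≤ 1/2)
      (by norm_num)
    have he : ((1/2 : ℝ) • (fun j : Fin d => x j.succ - x 0) +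
        (1/2 : ℝ) • (fun j : Fin d => y j.succ - y 0))
        = (fun j : Fin d => (fun k => x k / 2 + y k / 2) j.succ -
            (fun k => x k / 2 + y k / 2) 0) := by
      funext j
      simp only [Pi.add_apply, Pi.smul_apply, smul_eq_mul]
      ring
    rw [← he]
    exact hmem
  · have h1 := hx.2
    have h2 := hy.2
    dsimp only
    rw [h1, h2]
    norm_num

lemma uu_mem_CJ (v : Fin n → Fin d → ℝ) (J : Fin (d + 1)) (i : Fin n) :
    uu v J i ∈ CJ v J := by
  constructor
  · intro K
    refine ⟨i, fun k => le_of_eq ?_⟩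
    simp only [uu]
    ring
  · simp [uu]

lemma CJ_subset_Icc (hn : 0 < n) (v : Fin n → Fin d → ℝ) (J : Fin (d + 1)) :
    CJ v J ⊆ Set.Icc (fun k => ⨅ i, uu v J i k) (fun k => ⨆ i, uu v J i k) := by
  haveI : Nonempty (Fin n) := ⟨⟨0, hn⟩⟩
  intro x hx
  rw [Set.mem_Icc]
  constructor
  · intro k
    obtain ⟨i, hi⟩ := hx.1 k
    have h1 := hi J
    have h2 := hx.2
    have h3 : uu v J i k ≤ x k := by simp only [uu]; linarith
    exact le_trans (ciInf_le (Set.Finite.bddBelow (Set.finite_range _)) i) h3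
  · intro k
    obtain ⟨i, hi⟩ := hx.1 J
    have h1 := hi k
    have h2 := hx.2
    have h3 : x k ≤ uu v J i k := by simp only [uu]; linarith
    refine le_trans h3 ?_
    exact le_ciSup (f := fun i => uu v J i k) (Set.Finite.bddAbove (Set.finite_range _)) i

lemma isClosed_CJ (v : Fin n → Fin d → ℝ) (J : Fin (d + 1)) : IsClosed (CJ v J) := by
  have he : CJ v J = (⋂ K, ⋃ i, ⋂ k,
      {x : Fin (d + 1) → ℝ | x k - _root_.ext (v i) k ≤ x K - _root_.ext (v i) K}) ∩
      {x : Fin (d + 1) → ℝ | x J = 0} := by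
    ext x
    simp [CJ, Cover, Cov, Set.mem_iInter, Set.mem_iUnion]
  rw [he]
  refine IsClosed.inter (isClosed_iInter fun K => isClosed_iUnion_of_finite fun i =>
    isClosed_iInter fun k => ?_) (isClosed_eq (continuous_apply J) continuous_const)
  exact isClosed_le ((continuous_apply k).sub continuous_const)
    ((continuous_apply K).sub continuous_const)

lemma isCompact_CJ (hn : 0 < n) (v : Fin n → Fin d → ℝ) (J : Fin (d + 1)) :
    IsCompact (CJ v J) :=
  IsCompact.of_isClosed_subset isCompact_Icc (isClosed_CJ v J) (CJ_subset_Icc hn v J)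

/-- Key step: above every point of the slice there is a generator.  This is where the
covector structure ("push lemma") is used. -/
lemma exists_gen_above (hn : 0 < n) (v : Fin n → Fin d → ℝ) (J : Fin (d + 1))
    {y0 : Fin (d + 1) → ℝ} (hy0 : y0 ∈ CJ v J) :
    ∃ i, ∀ k, y0 k ≤ uu v J i k := by
  classical
  haveI : Nonempty (Fin n) := ⟨⟨0, hn⟩⟩
  set T := CJ v J ∩ {x | ∀ k, y0 k ≤ x k} with hTdef
  have hTclosed : IsClosed T := by
    refine (isClosed_CJ v J).inter ?_
    have he : {x : Fin (d + 1) → ℝ | ∀ k, y0 k ≤ x k} = ⋂ k, {x | y0 k ≤ x k} := by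
      ext x; simp
    rw [he]
    exact isClosed_iInter fun k => isClosed_le continuous_const (continuous_apply k)
  have hTcpt : IsCompact T :=
    IsCompact.of_isClosed_subset (isCompact_CJ hn v J) hTclosed Set.inter_subset_left
  have hTne : T.Nonempty := ⟨y0, hy0, fun k => le_rfl⟩
  obtain ⟨ys, hysT, hysmax⟩ := hTcpt.exists_isMaxOn hTne
    ((continuous_finset_sum Finset.univ fun k _ => continuous_apply k).continuousOn
      (f := fun x : Fin (d + 1) → ℝ => ∑ k, x k))
  have hmax : ∀ z ∈ CJ v J, (∀ k, ys k ≤ z k) → z = ys := by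
    intro z hz hge
    have hzT : z ∈ T := ⟨hz, fun k => le_trans (hysT.2 k) (hge k)⟩
    have hsum : ∑ k, z k ≤ ∑ k, ys k := hysmax hzT
    funext k
    by_contra hne
    have hlt : ys k < z k := lt_of_le_of_ne (hge k) (fun h => hne h.symm)
    have : ∑ kk, ys kk < ∑ kk, z kk :=
      Finset.sum_lt_sum (fun i _ => hge i) ⟨k, Finset.mem_univ k, hlt⟩
    linarith
  obtain ⟨i0, hi0⟩ := hysT.1.1 J
  by_cases hZ : ∀ k, ys k - _root_.ext (v i0) k = ys J - _root_.ext (v i0) J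
  · refine ⟨i0, fun k => ?_⟩
    have h1 := hysT.2 k
    have h2 := hZ k
    have h3 := hysT.1.2
    simp only [uu]
    linarith
  · exfalso
    push_neg at hZ
    obtain ⟨k0, hk0⟩ := hZ
    set Zc : Finset (Fin (d + 1)) :=
      Finset.univ.filter
        (fun k => ys k - _root_.ext (v i0) k ≠ ys J - _root_.ext (v i0) J) with hZcdef
    have hZcne : Zc.Nonempty := ⟨k0, by simp [hZcdef, hk0]⟩
    set ε := Zc.inf' hZcne
      (fun k => (ys J - _root_.ext (v i0) J) - (ys k - _root_.ext (v i0) k)) with hεdef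
    have hεpos : 0 < ε := by
      rw [hεdef, Finset.lt_inf'_iff]
      intro k hk
      have hle := hi0 k
      have hne : ys k - _root_.ext (v i0) k ≠ ys J - _root_.ext (v i0) J := by
        simpa [hZcdef] using hk
      have := lt_of_le_of_ne hle hne
      linarith
    set z := fun k => ys k +
      (if ys k - _root_.ext (v i0) k = ys J - _root_.ext (v i0) J then 0 else ε) with hzdef
    have hzC : z ∈ CJ v J := by
      constructor
      · intro K
        by_cases hK : ys K - _root_.ext (v i0) K = ys J - _root_.ext (v i0) J
        · refine ⟨i0, fun k => ?_⟩
          show z k - _ ≤ z K - _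
          rw [hzdef]
          dsimp only
          rw [if_pos hK]
          by_cases hkk : ys k - _root_.ext (v i0) k = ys J - _root_.ext (v i0) J
          · rw [if_pos hkk]; linarith
          · rw [if_neg hkk]
            have hin : k ∈ Zc := by simp [hZcdef, hkk]
            have := Finset.inf'_le
              (fun k => (ys J - _root_.ext (v i0) J) - (ys k - _root_.ext (v i0) k)) hin
            rw [← hεdef] at this
            linarith
        · obtain ⟨i, hi⟩ := hysT.1.1 K
          refine ⟨i, fun k => ?_⟩
          show z k - _ ≤ z K - _
          rw [hzdef]
          dsimp only
          rw [if_neg hK]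
          have h1 := hi k
          have h2 : (if ys k - _root_.ext (v i0) k = ys J - _root_.ext (v i0) J
              then (0:ℝ) else ε) ≤ ε := by
            split <;> linarith
          linarith
      · show z J = 0
        rw [hzdef]
        dsimp only
        rw [if_pos rfl]
        have := hysT.1.2
        linarith
    have hzge : ∀ k, ys k ≤ z k := by
      intro k
      rw [hzdef]
      dsimp only
      split <;> linarith
    have heq := hmax z hzC hzge
    have hk0' : z k0 = ys k0 := by rw [heq]
    rw [hzdef] at hk0'
    dsimp only at hk0'
    rw [if_neg hk0] at hk0'
    linarith

/-- Main lemma: convexity forces the existence of a dominating generator in each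
normalization. -/
lemma exists_dominant (hn : 0 < n) (v : Fin n → Fin d → ℝ) (J : Fin (d + 1))
    (hconv : Convex ℝ (NSet v)) :
    ∃ im, ∀ i k, uu v J i k ≤ uu v J im k := by
  haveI : Nonempty (Fin n) := ⟨⟨0, hn⟩⟩
  obtain ⟨im, him⟩ := Finite.exists_max (fun i : Fin n => ∑ k, uu v J i k)
  have hWex : ∀ b : Fin n, ∃ i, ∀ k,
      uu v J im k / 2 + uu v J b k / 2 ≤ uu v J i k := by
    intro b
    obtain ⟨i, hi⟩ := exists_gen_above hn v J
      (mid_mem_CJ hconv (uu_mem_CJ v J im) (uu_mem_CJ v J b))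
    exact ⟨i, fun k => hi k⟩
  choose W hW using hWex
  have E1 : ∀ (r : ℕ) (b : Fin n) (k),
      (1 - (1/2:ℝ)^r) * uu v J im k + (1/2:ℝ)^r * uu v J b k ≤ uu v J (W^[r] b) k := by
    intro r
    induction r with
    | zero => intro b k; simp
    | succ r ih =>
      intro b k
      rw [Function.iterate_succ_apply']
      have h1 := hW (W^[r] b) k
      have h2 := ih b k
      have hp : (1/2:ℝ)^(r+1) = (1/2:ℝ)^r * (1/2) := pow_succ _ _
      rw [hp]
      linarith
  have E2 : ∀ (r : ℕ) (b : Fin n),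
      (∀ k, uu v J (W^[r] b) k ≤ uu v J im k) → ∀ k, uu v J b k ≤ uu v J im k := by
    intro r
    induction r with
    | zero => intro b h k; simpa using h k
    | succ r ih =>
      intro b h k
      have h' : ∀ k, uu v J (W^[r] (W b)) k ≤ uu v J im k := by
        intro k'
        have := h k'
        rwa [Function.iterate_succ_apply] at this
      have h3 := ih (W b) h' k
      have h4 := hW b k
      linarith
  refine ⟨im, fun i k => ?_⟩
  have main : ∀ (a b : ℕ), a < b → W^[a] i = W^[b] i → uu v J i k ≤ uu v J im k := by
    intro a b hab hWeq
    set bb := W^[a] i with hbb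
    set r := b - a with hr
    have hr1 : r ≠ 0 := by omega
    have hiter : W^[r] bb = bb := by
      rw [hbb, ← Function.iterate_add_apply]
      have hra : r + a = b := by omega
      rw [hra, ← hWeq]
    have h5 : ∀ k', uu v J im k' ≤ uu v J bb k' := by
      intro k'
      have h6 := E1 r bb k'
      rw [hiter] at h6
      have hplt : (1/2:ℝ)^r < 1 := pow_lt_one₀ (by norm_num) (by norm_num) hr1
      have hppos : (0:ℝ) < (1/2:ℝ)^r := by positivity
      nlinarith
    have h7 : ∀ k', uu v J bb k' = uu v J im k' := by
      intro k'
      by_contra h8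
      have h9 : uu v J im k' < uu v J bb k' := lt_of_le_of_ne (h5 k') (fun h => h8 h.symm)
      have h10 : ∑ kk, uu v J im kk < ∑ kk, uu v J bb kk :=
        Finset.sum_lt_sum (fun kk _ => h5 kk) ⟨k', Finset.mem_univ _, h9⟩
      have h11 := him bb
      linarith
    exact E2 a i (fun k' => le_of_eq (h7 k')) k
  obtain ⟨m1, m2, hne, heq⟩ := Fintype.exists_ne_map_eq_of_card_lt
    (fun m : Fin (n + 1) => W^[(m : ℕ)] i) (by simp)
  rcases lt_or_gt_of_ne hne with h | h
  · exact main m1 m2 (Fin.lt_def.mp h) heq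
  · exact main m2 m1 (Fin.lt_def.mp h) heq.symm

end CorneredHullProof

/-- A `d`-polytrope `P = tconv{v_1,…,v_n}` equals its cornered hull,
the intersection of the `d+1` cornered sectors `c_k + S̄_k`. -/
theorem polytrope_eq_cornered_hull {d n : ℕ} (hn : 0 < n)
    (v : Fin n → Fin d → ℝ)
    (hP : IsPolytrope (tconv (Set.range v)))
    (hdim : affineSpan ℝ (tconv (Set.range v)) = ⊤) :
    tconv (Set.range v) = ⋂ k : Fin (d + 1), sector (corner v k) k := by
  haveI : Nonempty (Fin n) := ⟨⟨0, hn⟩⟩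
  have hNeq := CorneredHullProof.tconv_eq_NSet hn v
  have hconv : Convex ℝ (CorneredHullProof.NSet v) := hNeq ▸ hP.2
  apply Set.Subset.antisymm
  · intro x hx
    have hx' : x ∈ CorneredHullProof.NSet v := (CorneredHullProof.tconv_subset_NSet v) hx
    refine Set.mem_iInter.2 fun K =>
      (CorneredHullProof.mem_sector_corner_iff hn v x K).2 fun j => ?_
    obtain ⟨i, hi⟩ := hx' j
    have h1 := hi K
    have h2 : (⨅ i', (_root_.ext (v i') j - _root_.ext (v i') K))
        ≤ _root_.ext (v i) j - _root_.ext (v i) K :=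
      ciInf_le (Set.Finite.bddBelow (Set.finite_range _)) i
    linarith
  · intro x hx
    rw [hNeq]
    show CorneredHullProof.Cover v (_root_.ext x)
    intro K
    obtain ⟨im, him⟩ := CorneredHullProof.exists_dominant hn v K hconv
    refine ⟨im, fun k => ?_⟩
    have h1 := (CorneredHullProof.mem_sector_corner_iff hn v x k).1 (Set.mem_iInter.1 hx k) K
    have h2 : (-(_root_.ext (v im) k - _root_.ext (v im) K))
        ≤ ⨅ i, (_root_.ext (v i) K - _root_.ext (v i) k) := by
      refine le_ciInf fun i => ?_
      have h3 := him i k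
      simp only [CorneredHullProof.uu] at h3
      linarith
    linarith
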